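/- The Schützenberger map θ descends to a well-defined anti-automorphism of the plactic monoid of rank n: if two words over {1,…,n} are Knuth-equivalent, then their images under θ are Knuth-equivalent. -/
import Mathlib


/-- The Knuth relations on words over the alphabet `Fin n`:
`xzy = zxy` for `x ≤ y < z` and `yxz = yzx` for `x < y ≤ z`. -/
def KnuthRel (n : ℕ) : FreeMonoid (Fin n) → FreeMonoid (Fin n) → Prop := fun a b =>
  (∃ x y z : Fin n, x ≤ y ∧ y < z ∧
      a = FreeMonoid.of x * FreeMonoid.of z * FreeMonoid.of y ∧
      b = FreeMonoid.of z * FreeMonoid.of x * FreeMonoid.of y) ∨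
  (∃ x y z : Fin n, x < y ∧ y ≤ z ∧
      a = FreeMonoid.of y * FreeMonoid.of x * FreeMonoid.of z ∧
      b = FreeMonoid.of y * FreeMonoid.of z * FreeMonoid.of x)

/-- The plactic monoid of rank `n`, presented by generators `Fin n` and the
Knuth relations. -/
def Plactic (n : ℕ) := (conGen (KnuthRel n)).Quotient

instance (n : ℕ) : Monoid (Plactic n) :=
  inferInstanceAs (Monoid (conGen (KnuthRel n)).Quotient)

/-- The canonical projection from the free monoid to the plactic monoid. -/
def Plactic.mk (n : ℕ) : FreeMonoid (Fin n) →* Plactic n := Con.mk' _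

/-- The Schützenberger map on words. -/
def theta (n : ℕ) (w : FreeMonoid (Fin n)) : FreeMonoid (Fin n) :=
  FreeMonoid.ofList ((FreeMonoid.toList w).map Fin.rev).reverse

lemma theta_mul (n : ℕ) (a b : FreeMonoid (Fin n)) :
    theta n (a * b) = theta n b * theta n a := by
  simp [theta, FreeMonoid.toList_mul]

lemma theta_of (n : ℕ) (x : Fin n) : theta n (FreeMonoid.of x) = FreeMonoid.of x.rev := rfl

/-- If two words over `{1,…,n}` are Knuth-equivalent, then their images under the
Schützenberger map (reverse and replace each letter by its mirror) are
Knuth-equivalent; hence the map descends to an anti-automorphism of `Plactic n`. -/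
theorem schutzenberger_descends (n : ℕ) (a b : FreeMonoid (Fin n))
    (h : conGen (KnuthRel n) a b) :
    conGen (KnuthRel n)
      (FreeMonoid.ofList ((FreeMonoid.toList a).map Fin.rev).reverse)
      (FreeMonoid.ofList ((FreeMonoid.toList b).map Fin.rev).reverse) := by
  show conGen (KnuthRel n) (theta n a) (theta n b)
  induction h with
  | of a b hab =>
      apply ConGen.Rel.of
      rcases hab with ⟨x, y, z, hxy, hyz, ha, hb⟩ | ⟨x, y, z, hxy, hyz, ha, hb⟩
      · -- a = x z y, b = z x y ; θa = y' z' x', θb = y' x' z'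
        subst ha; subst hb
        right
        refine ⟨z.rev, y.rev, x.rev, ?_, ?_, ?_, ?_⟩
        · exact Fin.rev_lt_rev.mpr hyz
        · exact Fin.rev_le_rev.mpr hxy
        · simp [theta, FreeMonoid.toList_mul, FreeMonoid.toList_of]; rfl
        · simp [theta, FreeMonoid.toList_mul, FreeMonoid.toList_of]; rfl
      · subst ha; subst hb
        left
        refine ⟨z.rev, y.rev, x.rev, ?_, ?_, ?_, ?_⟩
        · exact Fin.rev_le_rev.mpr hyz
        · exact Fin.rev_lt_rev.mpr hxy
        · simp [theta, FreeMonoid.toList_mul, FreeMonoid.toList_of]; rfl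
        · simp [theta, FreeMonoid.toList_mul, FreeMonoid.toList_of]; rfl
  | refl x => exact ConGen.Rel.refl _
  | symm _ ih => exact ConGen.Rel.symm ih
  | trans _ _ ih1 ih2 => exact ConGen.Rel.trans ih1 ih2
  | mul _ _ ih1 ih2 =>
      rw [theta_mul, theta_mul]
      exact ConGen.Rel.mul ih2 ih1
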